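/- For a ≥ b, the space H_{a,b} of bihomogeneous harmonic polynomials on R^{4p} decomposes as the direct sum of H^S_{a,b} = H_{a,b} ∩ Ker E and the image E†(H_{a+1,b-1}). -/

import Mathlib

open MvPolynomial

noncomputable section

/-- Index type for the variables `z_1,…,z_{2p}, z̄_1,…,z̄_{2p}` on `ℝ^{4p}`:
the pair `(k, i) : Fin p × Fin 2` encodes the variable with index `2k+1` (for `i = 0`)
or `2k+2` (for `i = 1`); `Sum.inl` gives a `z`-variable, `Sum.inr` a `z̄`-variable. -/
abbrev QIdx (p : ℕ) := (Fin p × Fin 2) ⊕ (Fin p × Fin 2)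

/-- Complex polynomials in the `4p` commuting variables `z_j, z̄_j`, `j = 1,…,2p`. -/
abbrev QPoly (p : ℕ) := MvPolynomial (QIdx p) ℂ

/-- The variable `z_j`. -/
def qz (p : ℕ) (j : Fin p × Fin 2) : QPoly p := X (Sum.inl j)

/-- The variable `z̄_j`. -/
def qzb (p : ℕ) (j : Fin p × Fin 2) : QPoly p := X (Sum.inr j)

/-- Multiplication by `z_j`. -/
def qmz (p : ℕ) (j : Fin p × Fin 2) : Module.End ℂ (QPoly p) := LinearMap.mulLeft ℂ (qz p j)

/-- Multiplication by `z̄_j`. -/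
def qmzb (p : ℕ) (j : Fin p × Fin 2) : Module.End ℂ (QPoly p) := LinearMap.mulLeft ℂ (qzb p j)

/-- `∂_{z_j}`. -/
def qdz (p : ℕ) (j : Fin p × Fin 2) : Module.End ℂ (QPoly p) := (pderiv (Sum.inl j)).toLinearMap

/-- `∂_{z̄_j}`. -/
def qdzb (p : ℕ) (j : Fin p × Fin 2) : Module.End ℂ (QPoly p) := (pderiv (Sum.inr j)).toLinearMap

/-- The Laplace operator `Δ_{4p} = 4 Σ_{j=1}^{2p} ∂_{z_j} ∂_{z̄_j}`. -/
def qlap (p : ℕ) : Module.End ℂ (QPoly p) := (4 : ℂ) • ∑ j : Fin p × Fin 2, qdz p j * qdzb p j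

/-- `r² = Σ_{j=1}^{2p} z_j z̄_j`. -/
def qr2 (p : ℕ) : QPoly p := ∑ j : Fin p × Fin 2, qz p j * qzb p j

/-- The symplectic ladder operator `E = Σ_{k=1}^p (z_{2k-1} ∂_{z̄_{2k}} − z_{2k} ∂_{z̄_{2k-1}})`. -/
def opE (p : ℕ) : Module.End ℂ (QPoly p) :=
  ∑ k : Fin p, (qmz p (k, 0) * qdzb p (k, 1) - qmz p (k, 1) * qdzb p (k, 0))

/-- The symplectic ladder operator
`E† = −Σ_{k=1}^p (z̄_{2k-1} ∂_{z_{2k}} − z̄_{2k} ∂_{z_{2k-1}})`. -/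
def opEd (p : ℕ) : Module.End ℂ (QPoly p) :=
  - ∑ k : Fin p, (qmzb p (k, 0) * qdz p (k, 1) - qmzb p (k, 1) * qdz p (k, 0))

/-- Weight recording the degree in the `z`-variables. -/
def qwz (p : ℕ) : QIdx p → ℕ := Sum.elim (fun _ => 1) (fun _ => 0)

/-- Weight recording the degree in the `z̄`-variables. -/
def qwzb (p : ℕ) : QIdx p → ℕ := Sum.elim (fun _ => 0) (fun _ => 1)

/-- `P_{a,b}`: polynomials of bidegree `(a,b)`, i.e. `a`-homogeneous in the `z_j` and
`b`-homogeneous in the `z̄_j`. -/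
def qPab (p a b : ℕ) : Submodule ℂ (QPoly p) :=
  weightedHomogeneousSubmodule ℂ (qwz p) a ⊓ weightedHomogeneousSubmodule ℂ (qwzb p) b

/-- `H_{a,b}`: harmonic polynomials of bidegree `(a,b)`. -/
def qHab (p a b : ℕ) : Submodule ℂ (QPoly p) := qPab p a b ⊓ LinearMap.ker (qlap p)

/-- `H^S_{a,b} = H_{a,b} ∩ Ker E`: symplectic harmonics of bidegree `(a,b)`. -/
def qHS (p a b : ℕ) : Submodule ℂ (QPoly p) := qHab p a b ⊓ LinearMap.ker (opE p)

/-- `H^{S†}_{a,b} = H_{a,b} ∩ Ker E†`: adjoint symplectic harmonics of bidegree `(a,b)`. -/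
def qHSd (p a b : ℕ) : Submodule ℂ (QPoly p) := qHab p a b ⊓ LinearMap.ker (opEd p)

namespace StmtAux

variable {p : ℕ}

/-- Generic partial derivative as an endomorphism. -/
def qd (i : QIdx p) : Module.End ℂ (QPoly p) := (pderiv i).toLinearMap

/-- Generic multiplication by a variable as an endomorphism. -/
def qm (i : QIdx p) : Module.End ℂ (QPoly p) := LinearMap.mulLeft ℂ (X i)

lemma qdz_eq (j : Fin p × Fin 2) : qdz p j = qd (Sum.inl j) := rfl
lemma qdzb_eq (j : Fin p × Fin 2) : qdzb p j = qd (Sum.inr j) := rfl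
lemma qmz_eq (j : Fin p × Fin 2) : qmz p j = qm (Sum.inl j) := rfl
lemma qmzb_eq (j : Fin p × Fin 2) : qmzb p j = qm (Sum.inr j) := rfl

lemma qd_apply (i : QIdx p) (f : QPoly p) : qd i f = pderiv i f := rfl
lemma qm_apply (i : QIdx p) (f : QPoly p) : qm i f = X i * f := rfl

lemma qd_comm (i j : QIdx p) : qd i * qd j = qd j * qd i := by
  apply LinearMap.ext; intro f
  induction f using MvPolynomial.induction_on' with
  | monomial s a =>
    simp only [Module.End.mul_apply, qd_apply, pderiv_monomial]
    rcases eq_or_ne i j with rfl | hij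
    · rfl
    · have he : s - Finsupp.single j 1 - Finsupp.single i 1
          = s - Finsupp.single i 1 - Finsupp.single j 1 := by
        ext k
        simp only [Finsupp.tsub_apply]
        omega
      rw [he, Finsupp.tsub_apply, Finsupp.tsub_apply,
        Finsupp.single_eq_of_ne' hij, Finsupp.single_eq_of_ne' (Ne.symm hij)]
      congr 1
      simp only [Nat.sub_zero]
      ring
  | add f g hf hg =>
    simp only [Module.End.mul_apply, qd_apply, map_add] at *
    rw [hf, hg]

lemma qm_comm (i j : QIdx p) : qm i * qm j = qm j * qm i := by
  apply LinearMap.ext; intro f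
  simp only [Module.End.mul_apply, qm_apply]
  ring

lemma qd_qm (i j : QIdx p) :
    qd i * qm j = qm j * qd i + (if i = j then 1 else 0) := by
  apply LinearMap.ext; intro f
  simp only [Module.End.mul_apply, qd_apply, qm_apply, LinearMap.add_apply]
  rw [pderiv_mul, pderiv_X]
  rcases eq_or_ne i j with rfl | hij
  · simp [Pi.single_eq_same, add_comm]
  · simp [Pi.single_eq_of_ne' hij, hij]

end StmtAux
namespace StmtAux2
open StmtAux

variable {p : ℕ}

lemma pd_pd (i j : QIdx p) (f : QPoly p) :
    pderiv i (pderiv j f) = pderiv j (pderiv i f) := by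
  have h := LinearMap.ext_iff.mp (qd_comm (p := p) i j) f
  simpa [Module.End.mul_apply, qd_apply] using h

lemma opE_apply (f : QPoly p) :
    opE p f = ∑ k : Fin p, (X (Sum.inl (k,0)) * pderiv (Sum.inr (k,1)) f
      - X (Sum.inl (k,1)) * pderiv (Sum.inr (k,0)) f) := by
  simp [opE, qmz, qdzb, qz, LinearMap.sum_apply, Module.End.mul_apply,
    LinearMap.sub_apply, LinearMap.mulLeft_apply]

lemma opEd_apply (f : QPoly p) :
    opEd p f = -∑ k : Fin p, (X (Sum.inr (k,0)) * pderiv (Sum.inl (k,1)) f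
      - X (Sum.inr (k,1)) * pderiv (Sum.inl (k,0)) f) := by
  simp [opEd, qmzb, qdz, qzb, LinearMap.sum_apply, Module.End.mul_apply,
    LinearMap.sub_apply, LinearMap.mulLeft_apply]

lemma qlap_apply (f : QPoly p) :
    qlap p f = (4:ℂ) • ∑ j : Fin p × Fin 2,
      pderiv (Sum.inl j) (pderiv (Sum.inr j) f) := by
  simp [qlap, qdz, qdzb, LinearMap.sum_apply, Module.End.mul_apply, LinearMap.smul_apply]

/-- key per-term identity for `[Δ, E]`. -/
lemma lap_term_E (m n : Fin p × Fin 2) (f : QPoly p) :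
    ∑ j : Fin p × Fin 2,
        pderiv (Sum.inl j) (pderiv (Sum.inr j) (X (Sum.inl m) * pderiv (Sum.inr n) f))
      = X (Sum.inl m) * pderiv (Sum.inr n)
          (∑ j : Fin p × Fin 2, pderiv (Sum.inl j) (pderiv (Sum.inr j) f))
        + pderiv (Sum.inr m) (pderiv (Sum.inr n) f) := by
  have hterm : ∀ j : Fin p × Fin 2,
      pderiv (Sum.inl j) (pderiv (Sum.inr j) (X (Sum.inl m) * pderiv (Sum.inr n) f))
        = X (Sum.inl m) * pderiv (Sum.inr n)
            (pderiv (Sum.inl j) (pderiv (Sum.inr j) f))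
          + (if j = m then pderiv (Sum.inr m) (pderiv (Sum.inr n) f) else 0) := by
    intro j
    rw [pderiv_mul (i := Sum.inr j), pderiv_X_of_ne (by simp), zero_mul, zero_add]
    rw [pderiv_mul (i := Sum.inl j), pderiv_X]
    have hmain : pderiv (Sum.inl j) (pderiv (Sum.inr j) (pderiv (Sum.inr n) f))
        = pderiv (Sum.inr n) (pderiv (Sum.inl j) (pderiv (Sum.inr j) f)) := by
      rw [pd_pd (Sum.inr j) (Sum.inr n) f, pd_pd (Sum.inl j) (Sum.inr n)]
    rcases eq_or_ne j m with rfl | hjm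
    · rw [Pi.single_eq_same, one_mul, if_pos rfl, hmain, pd_pd (Sum.inr j) (Sum.inr n)]
      ring
    · have hne : (Sum.inl j : QIdx p) ≠ Sum.inl m := by simp [hjm]
      rw [Pi.single_eq_of_ne' hne, zero_mul, zero_add, if_neg hjm, add_zero, hmain]
  calc ∑ j : Fin p × Fin 2,
      pderiv (Sum.inl j) (pderiv (Sum.inr j) (X (Sum.inl m) * pderiv (Sum.inr n) f))
      = ∑ j : Fin p × Fin 2, (X (Sum.inl m) * pderiv (Sum.inr n)
            (pderiv (Sum.inl j) (pderiv (Sum.inr j) f))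
          + (if j = m then pderiv (Sum.inr m) (pderiv (Sum.inr n) f) else 0)) :=
        Finset.sum_congr rfl (fun j _ => hterm j)
    _ = X (Sum.inl m) * pderiv (Sum.inr n)
          (∑ j : Fin p × Fin 2, pderiv (Sum.inl j) (pderiv (Sum.inr j) f))
        + pderiv (Sum.inr m) (pderiv (Sum.inr n) f) := by
        rw [Finset.sum_add_distrib, Finset.sum_ite_eq' Finset.univ m
          (fun _ => pderiv (Sum.inr m) (pderiv (Sum.inr n) f)),
          if_pos (Finset.mem_univ m), map_sum, Finset.mul_sum]

lemma lap_opE (f : QPoly p) : qlap p (opE p f) = opE p (qlap p f) := by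
  have h1 : qlap p (opE p f) = (4:ℂ) • ∑ k : Fin p,
      (X (Sum.inl (k,0)) * pderiv (Sum.inr (k,1))
          (∑ j : Fin p × Fin 2, pderiv (Sum.inl j) (pderiv (Sum.inr j) f))
        - X (Sum.inl (k,1)) * pderiv (Sum.inr (k,0))
          (∑ j : Fin p × Fin 2, pderiv (Sum.inl j) (pderiv (Sum.inr j) f))) := by
    rw [qlap_apply, opE_apply]
    congr 1
    simp only [map_sum, map_sub]
    rw [Finset.sum_comm]
    refine Finset.sum_congr rfl (fun k _ => ?_)
    rw [Finset.sum_sub_distrib, lap_term_E (k,0) (k,1) f, lap_term_E (k,1) (k,0) f,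
      pd_pd (Sum.inr (k,0)) (Sum.inr (k,1))]
    simp only [map_sum]
    ring
  rw [h1, qlap_apply f, map_smul, opE_apply]

/-- key per-term identity for `[Δ, E†]`. -/
lemma lap_term_Ed (m n : Fin p × Fin 2) (f : QPoly p) :
    ∑ j : Fin p × Fin 2,
        pderiv (Sum.inl j) (pderiv (Sum.inr j) (X (Sum.inr m) * pderiv (Sum.inl n) f))
      = X (Sum.inr m) * pderiv (Sum.inl n)
          (∑ j : Fin p × Fin 2, pderiv (Sum.inl j) (pderiv (Sum.inr j) f))
        + pderiv (Sum.inl m) (pderiv (Sum.inl n) f) := by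
  have hterm : ∀ j : Fin p × Fin 2,
      pderiv (Sum.inl j) (pderiv (Sum.inr j) (X (Sum.inr m) * pderiv (Sum.inl n) f))
        = X (Sum.inr m) * pderiv (Sum.inl n)
            (pderiv (Sum.inl j) (pderiv (Sum.inr j) f))
          + (if j = m then pderiv (Sum.inl m) (pderiv (Sum.inl n) f) else 0) := by
    intro j
    rw [pderiv_mul (i := Sum.inr j), pderiv_X]
    have hmain : pderiv (Sum.inl j) (X (Sum.inr m) * pderiv (Sum.inr j) (pderiv (Sum.inl n) f))
        = X (Sum.inr m) * pderiv (Sum.inl n) (pderiv (Sum.inl j) (pderiv (Sum.inr j) f)) := by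
      rw [pderiv_mul (i := Sum.inl j), pderiv_X_of_ne (by simp), zero_mul, zero_add,
        pd_pd (Sum.inr j) (Sum.inl n) f, pd_pd (Sum.inl j) (Sum.inl n)]
    rcases eq_or_ne j m with rfl | hjm
    · rw [Pi.single_eq_same, one_mul, if_pos rfl, map_add, hmain,
        pd_pd (Sum.inl j) (Sum.inl n)]
      ring
    · have hne : (Sum.inr j : QIdx p) ≠ Sum.inr m := by simp [hjm]
      rw [Pi.single_eq_of_ne' hne, zero_mul, zero_add, if_neg hjm, add_zero, hmain]
  calc ∑ j : Fin p × Fin 2,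
      pderiv (Sum.inl j) (pderiv (Sum.inr j) (X (Sum.inr m) * pderiv (Sum.inl n) f))
      = ∑ j : Fin p × Fin 2, (X (Sum.inr m) * pderiv (Sum.inl n)
            (pderiv (Sum.inl j) (pderiv (Sum.inr j) f))
          + (if j = m then pderiv (Sum.inl m) (pderiv (Sum.inl n) f) else 0)) :=
        Finset.sum_congr rfl (fun j _ => hterm j)
    _ = _ := by
        rw [Finset.sum_add_distrib, Finset.sum_ite_eq' Finset.univ m
          (fun _ => pderiv (Sum.inl m) (pderiv (Sum.inl n) f)),
          if_pos (Finset.mem_univ m), map_sum, Finset.mul_sum]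

lemma lap_opEd (f : QPoly p) : qlap p (opEd p f) = opEd p (qlap p f) := by
  have h1 : qlap p (opEd p f) = (4:ℂ) • -∑ k : Fin p,
      (X (Sum.inr (k,0)) * pderiv (Sum.inl (k,1))
          (∑ j : Fin p × Fin 2, pderiv (Sum.inl j) (pderiv (Sum.inr j) f))
        - X (Sum.inr (k,1)) * pderiv (Sum.inl (k,0))
          (∑ j : Fin p × Fin 2, pderiv (Sum.inl j) (pderiv (Sum.inr j) f))) := by
    rw [qlap_apply, opEd_apply]
    congr 1
    simp only [map_sum, map_sub, map_neg, Finset.sum_neg_distrib]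
    congr 1
    rw [Finset.sum_comm]
    refine Finset.sum_congr rfl (fun k _ => ?_)
    rw [Finset.sum_sub_distrib, lap_term_Ed (k,0) (k,1) f, lap_term_Ed (k,1) (k,0) f,
      pd_pd (Sum.inl (k,0)) (Sum.inl (k,1))]
    simp only [map_sum]
    ring
  rw [h1, qlap_apply f, map_smul, opEd_apply]

end StmtAux2
namespace StmtAux3
open StmtAux StmtAux2

variable {p : ℕ}

lemma pd_X_mul (i j : QIdx p) (g : QPoly p) :
    pderiv i (X j * g) = (if i = j then g else 0) + X j * pderiv i g := by
  rw [pderiv_mul, pderiv_X, Pi.single_apply]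
  rcases eq_or_ne i j with rfl | h
  · simp
  · simp [h, Ne.symm h]

lemma pd_opEd1 (k : Fin p) (f : QPoly p) :
    pderiv (Sum.inr (k,1)) (opEd p f)
      = pderiv (Sum.inl (k,0)) f
        - ∑ l : Fin p, (X (Sum.inr (l,0)) * pderiv (Sum.inr (k,1)) (pderiv (Sum.inl (l,1)) f)
            - X (Sum.inr (l,1)) * pderiv (Sum.inr (k,1)) (pderiv (Sum.inl (l,0)) f)) := by
  rw [opEd_apply f, map_neg, map_sum]
  have hterm : ∀ l : Fin p,
      pderiv (Sum.inr (k,1)) (X (Sum.inr (l,0)) * pderiv (Sum.inl (l,1)) f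
          - X (Sum.inr (l,1)) * pderiv (Sum.inl (l,0)) f)
      = (X (Sum.inr (l,0)) * pderiv (Sum.inr (k,1)) (pderiv (Sum.inl (l,1)) f)
          - X (Sum.inr (l,1)) * pderiv (Sum.inr (k,1)) (pderiv (Sum.inl (l,0)) f))
        - (if l = k then pderiv (Sum.inl (k,0)) f else 0) := by
    intro l
    rw [map_sub, pd_X_mul, pd_X_mul]
    have h1 : ((Sum.inr (k,1) : QIdx p) = Sum.inr (l,0)) = False := by
      simp [Prod.ext_iff]
    have h2 : ((Sum.inr (k,1) : QIdx p) = Sum.inr (l,1)) ↔ l = k := by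
      simp [Prod.ext_iff, eq_comm]
    simp only [h1, h2, if_false, zero_add]
    rcases eq_or_ne l k with rfl | h
    · simp only [if_pos rfl]; ring
    · simp only [if_neg h, add_zero, sub_zero]; ring
  rw [Finset.sum_congr rfl (fun l _ => hterm l), Finset.sum_sub_distrib,
    Finset.sum_ite_eq' Finset.univ k, if_pos (Finset.mem_univ k)]
  ring

lemma pd_opEd0 (k : Fin p) (f : QPoly p) :
    pderiv (Sum.inr (k,0)) (opEd p f)
      = -pderiv (Sum.inl (k,1)) f
        - ∑ l : Fin p, (X (Sum.inr (l,0)) * pderiv (Sum.inr (k,0)) (pderiv (Sum.inl (l,1)) f)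
            - X (Sum.inr (l,1)) * pderiv (Sum.inr (k,0)) (pderiv (Sum.inl (l,0)) f)) := by
  rw [opEd_apply f, map_neg, map_sum]
  have hterm : ∀ l : Fin p,
      pderiv (Sum.inr (k,0)) (X (Sum.inr (l,0)) * pderiv (Sum.inl (l,1)) f
          - X (Sum.inr (l,1)) * pderiv (Sum.inl (l,0)) f)
      = (X (Sum.inr (l,0)) * pderiv (Sum.inr (k,0)) (pderiv (Sum.inl (l,1)) f)
          - X (Sum.inr (l,1)) * pderiv (Sum.inr (k,0)) (pderiv (Sum.inl (l,0)) f))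
        + (if l = k then pderiv (Sum.inl (k,1)) f else 0) := by
    intro l
    rw [map_sub, pd_X_mul, pd_X_mul]
    have h1 : ((Sum.inr (k,0) : QIdx p) = Sum.inr (l,1)) = False := by
      simp [Prod.ext_iff]
    have h2 : ((Sum.inr (k,0) : QIdx p) = Sum.inr (l,0)) ↔ l = k := by
      simp [Prod.ext_iff, eq_comm]
    simp only [h1, h2, if_false, zero_add]
    rcases eq_or_ne l k with rfl | h
    · simp only [if_pos rfl]; ring
    · simp only [if_neg h, add_zero, sub_zero]; ring
  rw [Finset.sum_congr rfl (fun l _ => hterm l), Finset.sum_add_distrib,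
    Finset.sum_ite_eq' Finset.univ k, if_pos (Finset.mem_univ k)]
  ring

lemma pd_opE1 (k : Fin p) (f : QPoly p) :
    pderiv (Sum.inl (k,1)) (opE p f)
      = -pderiv (Sum.inr (k,0)) f
        + ∑ l : Fin p, (X (Sum.inl (l,0)) * pderiv (Sum.inl (k,1)) (pderiv (Sum.inr (l,1)) f)
            - X (Sum.inl (l,1)) * pderiv (Sum.inl (k,1)) (pderiv (Sum.inr (l,0)) f)) := by
  rw [opE_apply f, map_sum]
  have hterm : ∀ l : Fin p,
      pderiv (Sum.inl (k,1)) (X (Sum.inl (l,0)) * pderiv (Sum.inr (l,1)) f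
          - X (Sum.inl (l,1)) * pderiv (Sum.inr (l,0)) f)
      = (X (Sum.inl (l,0)) * pderiv (Sum.inl (k,1)) (pderiv (Sum.inr (l,1)) f)
          - X (Sum.inl (l,1)) * pderiv (Sum.inl (k,1)) (pderiv (Sum.inr (l,0)) f))
        - (if l = k then pderiv (Sum.inr (k,0)) f else 0) := by
    intro l
    rw [map_sub, pd_X_mul, pd_X_mul]
    have h1 : ((Sum.inl (k,1) : QIdx p) = Sum.inl (l,0)) = False := by
      simp [Prod.ext_iff]
    have h2 : ((Sum.inl (k,1) : QIdx p) = Sum.inl (l,1)) ↔ l = k := by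
      simp [Prod.ext_iff, eq_comm]
    simp only [h1, h2, if_false, zero_add]
    rcases eq_or_ne l k with rfl | h
    · simp only [if_pos rfl]; ring
    · simp only [if_neg h, add_zero, sub_zero]; ring
  rw [Finset.sum_congr rfl (fun l _ => hterm l), Finset.sum_sub_distrib,
    Finset.sum_ite_eq' Finset.univ k, if_pos (Finset.mem_univ k)]
  ring

lemma pd_opE0 (k : Fin p) (f : QPoly p) :
    pderiv (Sum.inl (k,0)) (opE p f)
      = pderiv (Sum.inr (k,1)) f
        + ∑ l : Fin p, (X (Sum.inl (l,0)) * pderiv (Sum.inl (k,0)) (pderiv (Sum.inr (l,1)) f)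
            - X (Sum.inl (l,1)) * pderiv (Sum.inl (k,0)) (pderiv (Sum.inr (l,0)) f)) := by
  rw [opE_apply f, map_sum]
  have hterm : ∀ l : Fin p,
      pderiv (Sum.inl (k,0)) (X (Sum.inl (l,0)) * pderiv (Sum.inr (l,1)) f
          - X (Sum.inl (l,1)) * pderiv (Sum.inr (l,0)) f)
      = (X (Sum.inl (l,0)) * pderiv (Sum.inl (k,0)) (pderiv (Sum.inr (l,1)) f)
          - X (Sum.inl (l,1)) * pderiv (Sum.inl (k,0)) (pderiv (Sum.inr (l,0)) f))
        + (if l = k then pderiv (Sum.inr (k,1)) f else 0) := by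
    intro l
    rw [map_sub, pd_X_mul, pd_X_mul]
    have h1 : ((Sum.inl (k,0) : QIdx p) = Sum.inl (l,1)) = False := by
      simp [Prod.ext_iff]
    have h2 : ((Sum.inl (k,0) : QIdx p) = Sum.inl (l,0)) ↔ l = k := by
      simp [Prod.ext_iff, eq_comm]
    simp only [h1, h2, if_false, zero_add]
    rcases eq_or_ne l k with rfl | h
    · simp only [if_pos rfl]; ring
    · simp only [if_neg h, add_zero, sub_zero]; ring
  rw [Finset.sum_congr rfl (fun l _ => hterm l), Finset.sum_add_distrib,
    Finset.sum_ite_eq' Finset.univ k, if_pos (Finset.mem_univ k)]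
  ring

/-- The common double sum in `E E†` and `E† E`. -/
def S2 (f : QPoly p) : QPoly p := ∑ k : Fin p, ∑ l : Fin p,
  (X (Sum.inl (k,0)) * (X (Sum.inr (l,0)) * pderiv (Sum.inr (k,1)) (pderiv (Sum.inl (l,1)) f))
   - X (Sum.inl (k,0)) * (X (Sum.inr (l,1)) * pderiv (Sum.inr (k,1)) (pderiv (Sum.inl (l,0)) f))
   - X (Sum.inl (k,1)) * (X (Sum.inr (l,0)) * pderiv (Sum.inr (k,0)) (pderiv (Sum.inl (l,1)) f))
   + X (Sum.inl (k,1)) * (X (Sum.inr (l,1)) * pderiv (Sum.inr (k,0)) (pderiv (Sum.inl (l,0)) f)))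

lemma opE_opEd_eq (f : QPoly p) :
    opE p (opEd p f)
      = (∑ k : Fin p, (X (Sum.inl (k,0)) * pderiv (Sum.inl (k,0)) f
          + X (Sum.inl (k,1)) * pderiv (Sum.inl (k,1)) f)) - S2 f := by
  rw [opE_apply (opEd p f), S2, ← Finset.sum_sub_distrib]
  refine Finset.sum_congr rfl (fun k _ => ?_)
  rw [pd_opEd1 k f, pd_opEd0 k f]
  have hinner : (∑ l : Fin p,
      (X (Sum.inl (k,0)) * (X (Sum.inr (l,0)) * pderiv (Sum.inr (k,1)) (pderiv (Sum.inl (l,1)) f))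
       - X (Sum.inl (k,0)) * (X (Sum.inr (l,1)) * pderiv (Sum.inr (k,1)) (pderiv (Sum.inl (l,0)) f))
       - X (Sum.inl (k,1)) * (X (Sum.inr (l,0)) * pderiv (Sum.inr (k,0)) (pderiv (Sum.inl (l,1)) f))
       + X (Sum.inl (k,1)) * (X (Sum.inr (l,1)) * pderiv (Sum.inr (k,0)) (pderiv (Sum.inl (l,0)) f))))
      = X (Sum.inl (k,0)) * (∑ l : Fin p,
          (X (Sum.inr (l,0)) * pderiv (Sum.inr (k,1)) (pderiv (Sum.inl (l,1)) f)
            - X (Sum.inr (l,1)) * pderiv (Sum.inr (k,1)) (pderiv (Sum.inl (l,0)) f)))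
        - X (Sum.inl (k,1)) * (∑ l : Fin p,
          (X (Sum.inr (l,0)) * pderiv (Sum.inr (k,0)) (pderiv (Sum.inl (l,1)) f)
            - X (Sum.inr (l,1)) * pderiv (Sum.inr (k,0)) (pderiv (Sum.inl (l,0)) f))) := by
    rw [Finset.mul_sum, Finset.mul_sum, ← Finset.sum_sub_distrib]
    exact Finset.sum_congr rfl (fun l _ => by ring)
  rw [hinner]
  ring

lemma opEd_opE_eq (f : QPoly p) :
    opEd p (opE p f)
      = (∑ k : Fin p, (X (Sum.inr (k,0)) * pderiv (Sum.inr (k,0)) f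
          + X (Sum.inr (k,1)) * pderiv (Sum.inr (k,1)) f)) - S2 f := by
  rw [opEd_apply (opE p f)]
  have hS : S2 f = ∑ k : Fin p, ∑ l : Fin p,
      (X (Sum.inr (k,0)) * (X (Sum.inl (l,0)) * pderiv (Sum.inl (k,1)) (pderiv (Sum.inr (l,1)) f))
       - X (Sum.inr (k,0)) * (X (Sum.inl (l,1)) * pderiv (Sum.inl (k,1)) (pderiv (Sum.inr (l,0)) f))
       - X (Sum.inr (k,1)) * (X (Sum.inl (l,0)) * pderiv (Sum.inl (k,0)) (pderiv (Sum.inr (l,1)) f))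
       + X (Sum.inr (k,1)) * (X (Sum.inl (l,1)) * pderiv (Sum.inl (k,0)) (pderiv (Sum.inr (l,0)) f))) := by
    rw [S2, Finset.sum_comm]
    refine Finset.sum_congr rfl (fun k _ => Finset.sum_congr rfl (fun l _ => ?_))
    rw [pd_pd (Sum.inr (l,1)) (Sum.inl (k,1)), pd_pd (Sum.inr (l,1)) (Sum.inl (k,0)),
      pd_pd (Sum.inr (l,0)) (Sum.inl (k,1)), pd_pd (Sum.inr (l,0)) (Sum.inl (k,0))]
    ring
  rw [hS, ← Finset.sum_sub_distrib, ← Finset.sum_neg_distrib]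
  refine Finset.sum_congr rfl (fun k _ => ?_)
  rw [pd_opE1 k f, pd_opE0 k f]
  have hinner : (∑ l : Fin p,
      (X (Sum.inr (k,0)) * (X (Sum.inl (l,0)) * pderiv (Sum.inl (k,1)) (pderiv (Sum.inr (l,1)) f))
       - X (Sum.inr (k,0)) * (X (Sum.inl (l,1)) * pderiv (Sum.inl (k,1)) (pderiv (Sum.inr (l,0)) f))
       - X (Sum.inr (k,1)) * (X (Sum.inl (l,0)) * pderiv (Sum.inl (k,0)) (pderiv (Sum.inr (l,1)) f))
       + X (Sum.inr (k,1)) * (X (Sum.inl (l,1)) * pderiv (Sum.inl (k,0)) (pderiv (Sum.inr (l,0)) f))))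
      = X (Sum.inr (k,0)) * (∑ l : Fin p,
          (X (Sum.inl (l,0)) * pderiv (Sum.inl (k,1)) (pderiv (Sum.inr (l,1)) f)
            - X (Sum.inl (l,1)) * pderiv (Sum.inl (k,1)) (pderiv (Sum.inr (l,0)) f)))
        - X (Sum.inr (k,1)) * (∑ l : Fin p,
          (X (Sum.inl (l,0)) * pderiv (Sum.inl (k,0)) (pderiv (Sum.inr (l,1)) f)
            - X (Sum.inl (l,1)) * pderiv (Sum.inl (k,0)) (pderiv (Sum.inr (l,0)) f))) := by
    rw [Finset.mul_sum, Finset.mul_sum, ← Finset.sum_sub_distrib]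
    exact Finset.sum_congr rfl (fun l _ => by ring)
  rw [hinner]
  ring

end StmtAux3
namespace StmtAux4
open StmtAux StmtAux2 StmtAux3

variable {p : ℕ}

lemma X_mul_pd_monomial (i : QIdx p) (d : QIdx p →₀ ℕ) (c : ℂ) :
    X i * pderiv i (monomial d c) = (d i : ℂ) • monomial d c := by
  rw [pderiv_monomial]
  rcases Nat.eq_zero_or_pos (d i) with h | h
  · simp [h]
  · have hle : Finsupp.single i 1 ≤ d := by
      intro x
      rcases eq_or_ne x i with rfl | hx
      · simpa using Nat.one_le_iff_ne_zero.mpr h.ne'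
      · simp [Finsupp.single_eq_of_ne' (Ne.symm hx)]
    rw [X, monomial_mul, one_mul, add_tsub_cancel_of_le hle, smul_monomial,
      smul_eq_mul, mul_comm]

lemma weight_eq_sum (w : QIdx p → ℕ) (d : QIdx p →₀ ℕ) :
    Finsupp.weight w d = ∑ i : QIdx p, d i * w i := by
  rw [Finsupp.weight_apply, Finsupp.sum_fintype]
  · simp [smul_eq_mul]
  · intro i; simp

lemma euler_core (w : QIdx p → ℕ) {A : ℕ} {f : QPoly p}
    (hf : IsWeightedHomogeneous w f A) :
    ∑ i : QIdx p, (w i : ℂ) • (X i * pderiv i f) = (A : ℂ) • f := by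
  have hmono : ∀ d ∈ f.support,
      ∑ i : QIdx p, (w i : ℂ) • (X i * pderiv i (monomial d (coeff d f)))
        = (A : ℂ) • monomial d (coeff d f) := by
    intro d hd
    have hsum : ∀ i : QIdx p, (w i : ℂ) • (X i * pderiv i (monomial d (coeff d f)))
        = ((d i * w i : ℕ) : ℂ) • monomial d (coeff d f) := by
      intro i
      rw [X_mul_pd_monomial, smul_smul]
      push_cast
      ring_nf
    rw [Finset.sum_congr rfl (fun i _ => hsum i), ← Finset.sum_smul]
    congr 1
    rw [← Nat.cast_sum, ← weight_eq_sum w d, hf (mem_support_iff.mp hd)]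
  calc ∑ i : QIdx p, (w i : ℂ) • (X i * pderiv i f)
      = ∑ i : QIdx p, (w i : ℂ) •
          (X i * pderiv i (∑ d ∈ f.support, monomial d (coeff d f))) := by
        rw [support_sum_monomial_coeff]
    _ = ∑ i : QIdx p, ∑ d ∈ f.support,
          (w i : ℂ) • (X i * pderiv i (monomial d (coeff d f))) := by
        refine Finset.sum_congr rfl (fun i _ => ?_)
        rw [map_sum, Finset.mul_sum, Finset.smul_sum]
    _ = ∑ d ∈ f.support, ∑ i : QIdx p,
          (w i : ℂ) • (X i * pderiv i (monomial d (coeff d f))) := Finset.sum_comm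
    _ = ∑ d ∈ f.support, (A : ℂ) • monomial d (coeff d f) :=
        Finset.sum_congr rfl hmono
    _ = (A : ℂ) • f := by rw [← Finset.smul_sum, support_sum_monomial_coeff]

lemma euler_z {A : ℕ} {f : QPoly p} (hf : IsWeightedHomogeneous (qwz p) f A) :
    ∑ j : Fin p × Fin 2, X (Sum.inl j) * pderiv (Sum.inl j) f = (A : ℂ) • f := by
  have h := euler_core (qwz p) hf
  rw [Fintype.sum_sum_type] at h
  simpa [qwz] using h

lemma euler_zb {B : ℕ} {f : QPoly p} (hf : IsWeightedHomogeneous (qwzb p) f B) :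
    ∑ j : Fin p × Fin 2, X (Sum.inr j) * pderiv (Sum.inr j) f = (B : ℂ) • f := by
  have h := euler_core (qwzb p) hf
  rw [Fintype.sum_sum_type] at h
  simpa [qwzb] using h

/-- The commutator `[E, E†]` acts on `P_{A,B}` as the scalar `A - B`. -/
lemma comm_scalar {A B : ℕ} {f : QPoly p} (hf : f ∈ qPab p A B) :
    opE p (opEd p f) - opEd p (opE p f) = ((A : ℂ) - (B : ℂ)) • f := by
  obtain ⟨hfz, hfzb⟩ := hf
  rw [opE_opEd_eq, opEd_opE_eq]
  have h1 : ∑ k : Fin p, (X (Sum.inl (k,0)) * pderiv (Sum.inl (k,0)) f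
      + X (Sum.inl (k,1)) * pderiv (Sum.inl (k,1)) f)
      = ∑ j : Fin p × Fin 2, X (Sum.inl j) * pderiv (Sum.inl j) f := by
    rw [Fintype.sum_prod_type]
    exact Finset.sum_congr rfl (fun k _ => by rw [Fin.sum_univ_two])
  have h2 : ∑ k : Fin p, (X (Sum.inr (k,0)) * pderiv (Sum.inr (k,0)) f
      + X (Sum.inr (k,1)) * pderiv (Sum.inr (k,1)) f)
      = ∑ j : Fin p × Fin 2, X (Sum.inr j) * pderiv (Sum.inr j) f := by
    rw [Fintype.sum_prod_type]
    exact Finset.sum_congr rfl (fun k _ => by rw [Fin.sum_univ_two])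
  rw [sub_sub_sub_cancel_right, h1, h2, euler_z hfz, euler_zb hfzb, sub_smul]

lemma isWH_pderiv (w : QIdx p → ℕ) (i : QIdx p) {A : ℕ} {f : QPoly p}
    (hf : IsWeightedHomogeneous w f A) :
    pderiv i f ∈ weightedHomogeneousSubmodule ℂ w (A - w i) := by
  have hrw : pderiv i f = ∑ d ∈ f.support, pderiv i (monomial d (coeff d f)) := by
    rw [← map_sum, support_sum_monomial_coeff]
  rw [hrw]
  apply Submodule.sum_mem
  intro d hd
  rw [pderiv_monomial]
  rcases Nat.eq_zero_or_pos (d i) with h | h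
  · simp [h]
  · rw [mem_weightedHomogeneousSubmodule]
    apply isWeightedHomogeneous_monomial
    have hle : Finsupp.single i 1 ≤ d := by
      intro x
      rcases eq_or_ne x i with rfl | hx
      · simpa using Nat.one_le_iff_ne_zero.mpr h.ne'
      · simp [Finsupp.single_eq_of_ne' (Ne.symm hx)]
    have hw : Finsupp.weight w d
        = Finsupp.weight w (d - Finsupp.single i 1) + w i := by
      conv_lhs => rw [← tsub_add_cancel_of_le hle]
      rw [map_add]
      congr 1
      rw [Finsupp.weight_apply, Finsupp.sum_single_index] <;> simp
    rw [hf (mem_support_iff.mp hd)] at hw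
    omega
  
lemma isWH_X_mul (w : QIdx p → ℕ) (i : QIdx p) {A : ℕ} {f : QPoly p}
    (hf : IsWeightedHomogeneous w f A) :
    X i * f ∈ weightedHomogeneousSubmodule ℂ w (A + w i) := by
  rw [mem_weightedHomogeneousSubmodule]
  have hX : IsWeightedHomogeneous w (X i : QPoly p) (w i) := by
    have := isWeightedHomogeneous_X ℂ w i
    exact this
  have := hX.mul hf
  rwa [add_comm] at this

end StmtAux4
namespace StmtAux5
open StmtAux StmtAux2 StmtAux3 StmtAux4

variable {p : ℕ}

lemma term_mem_E {A B : ℕ} {f : QPoly p} (m n : Fin p × Fin 2) (hf : f ∈ qPab p A B) :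
    X (Sum.inl m) * pderiv (Sum.inr n) f ∈ qPab p (A + 1) (B - 1) := by
  obtain ⟨h1, h2⟩ := hf
  constructor
  · have := isWH_X_mul (qwz p) (Sum.inl m) (isWH_pderiv (qwz p) (Sum.inr n) h1)
    simpa [qwz] using this
  · have := isWH_X_mul (qwzb p) (Sum.inl m) (isWH_pderiv (qwzb p) (Sum.inr n) h2)
    simpa [qwzb] using this

lemma term_mem_Ed {A B : ℕ} {f : QPoly p} (m n : Fin p × Fin 2) (hf : f ∈ qPab p A B) :
    X (Sum.inr m) * pderiv (Sum.inl n) f ∈ qPab p (A - 1) (B + 1) := by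
  obtain ⟨h1, h2⟩ := hf
  constructor
  · have := isWH_X_mul (qwz p) (Sum.inr m) (isWH_pderiv (qwz p) (Sum.inl n) h1)
    simpa [qwz] using this
  · have := isWH_X_mul (qwzb p) (Sum.inr m) (isWH_pderiv (qwzb p) (Sum.inl n) h2)
    simpa [qwzb] using this

lemma opE_mem_P {A B : ℕ} {f : QPoly p} (hf : f ∈ qPab p A B) :
    opE p f ∈ qPab p (A + 1) (B - 1) := by
  rw [opE_apply]
  exact Submodule.sum_mem _ fun k _ =>
    Submodule.sub_mem _ (term_mem_E _ _ hf) (term_mem_E _ _ hf)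

lemma opEd_mem_P {A B : ℕ} {f : QPoly p} (hf : f ∈ qPab p A B) :
    opEd p f ∈ qPab p (A - 1) (B + 1) := by
  rw [opEd_apply]
  exact Submodule.neg_mem _ (Submodule.sum_mem _ fun k _ =>
    Submodule.sub_mem _ (term_mem_Ed _ _ hf) (term_mem_Ed _ _ hf))

lemma opE_mem_H {A B : ℕ} {f : QPoly p} (hf : f ∈ qHab p A B) :
    opE p f ∈ qHab p (A + 1) (B - 1) := by
  refine ⟨opE_mem_P hf.1, ?_⟩
  show opE p f ∈ LinearMap.ker (qlap p)
  rw [LinearMap.mem_ker, lap_opE, LinearMap.mem_ker.mp hf.2, map_zero]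

lemma opEd_mem_H {A B : ℕ} {f : QPoly p} (hf : f ∈ qHab p A B) :
    opEd p f ∈ qHab p (A - 1) (B + 1) := by
  refine ⟨opEd_mem_P hf.1, ?_⟩
  show opEd p f ∈ LinearMap.ker (qlap p)
  rw [LinearMap.mem_ker, lap_opEd, LinearMap.mem_ker.mp hf.2, map_zero]

lemma pd_inr_eq_zero {f : QPoly p} (hf : IsWeightedHomogeneous (qwzb p) f 0)
    (j : Fin p × Fin 2) : pderiv (Sum.inr j) f = 0 := by
  apply pderiv_eq_zero_of_notMem_vars
  intro hmem
  rw [mem_vars] at hmem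
  obtain ⟨d, hd, hdj⟩ := hmem
  have h0 := hf (mem_support_iff.mp hd)
  rw [weight_eq_sum] at h0
  have hz : d (Sum.inr j) * qwzb p (Sum.inr j) = 0 :=
    Finset.sum_eq_zero_iff.mp h0 _ (Finset.mem_univ _)
  simp only [qwzb, Sum.elim_inr, mul_one] at hz
  exact (Finsupp.mem_support_iff.mp hdj) hz

lemma opE_zero {f : QPoly p} (hf : IsWeightedHomogeneous (qwzb p) f 0) :
    opE p f = 0 := by
  rw [opE_apply]
  apply Finset.sum_eq_zero
  intro k _
  rw [pd_inr_eq_zero hf, pd_inr_eq_zero hf]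
  simp

lemma qPab_le_rtd (A B : ℕ) :
    qPab p A B ≤ restrictTotalDegree (QIdx p) ℂ (A + B) := by
  intro f hf
  obtain ⟨h1, h2⟩ := hf
  rw [mem_restrictTotalDegree]
  refine Finset.sup_le fun d hd => ?_
  have e1 := h1 (mem_support_iff.mp hd)
  have e2 := h2 (mem_support_iff.mp hd)
  rw [weight_eq_sum] at e1 e2
  have hsum : (d.sum fun _ e => e) = ∑ i : QIdx p, d i := by
    rw [Finsupp.sum_fintype]
    intro i; rfl
  have hsplit : ∀ i : QIdx p, d i = d i * qwz p i + d i * qwzb p i := by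
    intro i
    rcases i with j | j <;> simp [qwz, qwzb]
  calc (d.sum fun _ e => e) = ∑ i : QIdx p, d i := hsum
    _ = ∑ i : QIdx p, (d i * qwz p i + d i * qwzb p i) :=
        Finset.sum_congr rfl fun i _ => hsplit i
    _ = A + B := by rw [Finset.sum_add_distrib, e1, e2]
    _ ≤ A + B := le_rfl

lemma fd_qHab (A B : ℕ) : FiniteDimensional ℂ (qHab p A B) :=
  Submodule.finiteDimensional_of_le
    (le_trans (inf_le_left : qHab p A B ≤ qPab p A B) (qPab_le_rtd A B))

/-- Key injectivity: if `w ∈ P_{a+1,b-1}` with `a ≥ b ≥ 1` and `E E† w = 0` then `w = 0`. -/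
lemma key {a b : ℕ} (hab : b ≤ a) (hb : 1 ≤ b) {w : QPoly p}
    (hw : w ∈ qPab p (a + 1) (b - 1)) (h0 : opE p (opEd p w) = 0) : w = 0 := by
  set u : ℕ → QPoly p := fun i => ((opE p) ^ i) w with hu
  have hu0 : u 0 = w := by simp [hu]
  have hstep : ∀ i, u (i + 1) = opE p (u i) := by
    intro i
    simp [hu, pow_succ', Module.End.mul_apply]
  have humem : ∀ i, i ≤ b - 1 → u i ∈ qPab p (a + 1 + i) (b - 1 - i) := by
    intro i
    induction i with
    | zero => intro _; simpa [hu0] using hw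
    | succ n ih =>
      intro hn
      have h1 : u n ∈ qPab p (a + 1 + n) (b - 1 - n) := ih (by omega)
      have h2 := opE_mem_P h1
      rw [hstep]
      convert h2 using 2 <;> omega
  have hubz : u b = 0 := by
    have h1 : u (b - 1) ∈ qPab p (a + 1 + (b - 1)) 0 := by
      have := humem (b - 1) le_rfl
      rwa [Nat.sub_self] at this
    have h2 : opE p (u (b - 1)) = 0 := opE_zero h1.2
    have hb' : b = (b - 1) + 1 := by omega
    rw [hb', hstep]
    exact h2
  have hrec : ∀ i, i + 1 ≤ b →
      opEd p (u (i + 1))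
        = (-((i : ℂ) + 1) * ((a : ℂ) - (b : ℂ) + 1 + (i : ℂ) + 1)) • u i := by
    intro i
    induction i with
    | zero =>
      intro _
      have hc := comm_scalar (humem 0 (Nat.zero_le _))
      rw [hu0, h0, zero_sub, neg_eq_iff_eq_neg] at hc
      rw [hstep 0, hu0, hc, ← neg_smul]
      congr 1
      have hbc : ((b - 1 : ℕ) : ℂ) = (b : ℂ) - 1 := by
        rw [Nat.cast_sub hb]; norm_num
      simp only [Nat.add_zero, Nat.sub_zero]
      rw [hbc]
      push_cast
      ring
    | succ n ih =>
      intro hn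
      have hmem1 : u (n + 1) ∈ qPab p (a + 1 + (n + 1)) (b - 1 - (n + 1)) :=
        humem (n + 1) (by omega)
      have hcs := comm_scalar hmem1
      have hEd : opEd p (opE p (u (n + 1)))
          = opE p (opEd p (u (n + 1)))
            - (((a + 1 + (n + 1) : ℕ) : ℂ) - ((b - 1 - (n + 1) : ℕ) : ℂ)) • u (n + 1) := by
        rw [← hcs]; ring_nf
      rw [hstep (n + 1), hEd, ih (by omega), map_smul, ← hstep n, ← sub_smul]
      congr 1
      have hc2 : ((b - 1 - (n + 1) : ℕ) : ℂ) = (b : ℂ) - ((n : ℂ) + 2) := by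
        have he : (b - 1 - (n + 1) : ℕ) = b - (n + 2) := by omega
        rw [he, Nat.cast_sub (by omega)]
        push_cast
        ring
      rw [hc2]
      push_cast
      ring
  have hdown : ∀ i, i ≤ b → u (b - i) = 0 := by
    intro i
    induction i with
    | zero => intro _; simpa using hubz
    | succ n ih =>
      intro hn
      have h1 : u (b - n) = 0 := ih (by omega)
      have h2 : b - n = (b - (n + 1)) + 1 := by omega
      have h3 := hrec (b - (n + 1)) (by omega)
      rw [← h2, h1, map_zero] at h3
      have hμ : (-(((b - (n + 1) : ℕ) : ℂ) + 1)
          * ((a : ℂ) - (b : ℂ) + 1 + ((b - (n + 1) : ℕ) : ℂ) + 1)) ≠ 0 := by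
        apply mul_ne_zero
        · intro hcon
          rw [neg_eq_zero] at hcon
          exact Nat.cast_add_one_ne_zero _ hcon
        · have hab' : (a : ℂ) - (b : ℂ) = ((a - b : ℕ) : ℂ) := by
            rw [Nat.cast_sub hab]
          rw [hab']
          have : ((a - b : ℕ) : ℂ) + 1 + ((b - (n + 1) : ℕ) : ℂ) + 1
              = ((a - b + 1 + (b - (n + 1)) + 1 : ℕ) : ℂ) := by push_cast; ring
          rw [this]
          exact Nat.cast_ne_zero.mpr (by omega)
      exact (smul_eq_zero.mp h3.symm).resolve_left hμ
  have := hdown b le_rfl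
  rwa [Nat.sub_self, hu0] at this

end StmtAux5

open StmtAux StmtAux2 StmtAux3 StmtAux4 StmtAux5

/-- For `a ≥ b ≥ 1`, the space `H_{a,b}` decomposes as the direct sum of
`H^S_{a,b} = H_{a,b} ∩ Ker E` and the image `E†(H_{a+1,b-1})`. -/
theorem stmt_10 (p a b : ℕ) (hab : b ≤ a) (hb : 1 ≤ b) :
    Disjoint (qHS p a b) (Submodule.map (opEd p) (qHab p (a + 1) (b - 1))) ∧
    qHS p a b ⊔ Submodule.map (opEd p) (qHab p (a + 1) (b - 1)) = qHab p a b := by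
  classical
  haveI : FiniteDimensional ℂ (qHab p (a + 1) (b - 1)) := fd_qHab (a + 1) (b - 1)
  have hb1 : (b - 1) + 1 = b := by omega
  have hEd_mem : ∀ {f : QPoly p}, f ∈ qHab p (a + 1) (b - 1) → opEd p f ∈ qHab p a b := by
    intro f hf
    have := opEd_mem_H hf
    rwa [Nat.add_sub_cancel, hb1] at this
  have hE_mem : ∀ {f : QPoly p}, f ∈ qHab p a b → opE p f ∈ qHab p (a + 1) (b - 1) :=
    fun hf => opE_mem_H hf
  let T : qHab p (a + 1) (b - 1) →ₗ[ℂ] qHab p (a + 1) (b - 1) :=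
    { toFun := fun x => ⟨opE p (opEd p x.1), hE_mem (hEd_mem x.2)⟩
      map_add' := fun x y => by ext1; simp
      map_smul' := fun c x => by ext1; simp }
  have hinj : Function.Injective T := by
    intro x y hxy
    have hval : opE p (opEd p (x : QPoly p)) = opE p (opEd p (y : QPoly p)) := by
      have := congrArg Subtype.val hxy
      simpa [T] using this
    have hsub : opE p (opEd p ((x : QPoly p) - y)) = 0 := by
      rw [map_sub, map_sub, hval, sub_self]
    have hxP : ((x : QPoly p) - y) ∈ qPab p (a + 1) (b - 1) :=
      (Submodule.sub_mem _ x.2 y.2).1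
    have hzero := key hab hb hxP hsub
    exact Subtype.ext (by rwa [sub_eq_zero] at hzero)
  have hsurj := LinearMap.injective_iff_surjective.mp hinj
  constructor
  · rw [Submodule.disjoint_def]
    intro x hx hmap
    obtain ⟨g, hg, hgx⟩ := hmap
    have h0 : opE p x = 0 := LinearMap.mem_ker.mp hx.2
    have hEEd : opE p (opEd p g) = 0 := by rw [hgx]; exact h0
    have hg0 : g = 0 := key hab hb hg.1 hEEd
    rw [← hgx, hg0, map_zero]
  · apply le_antisymm
    · apply sup_le
      · exact inf_le_left
      · rintro x ⟨g, hg, rfl⟩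
        exact hEd_mem hg
    · intro f hf
      obtain ⟨g, hg⟩ := hsurj ⟨opE p f, hE_mem hf⟩
      have hgval : opE p (opEd p (g : QPoly p)) = opE p f := by
        have := congrArg Subtype.val hg
        simpa [T] using this
      have h1 : f - opEd p (g : QPoly p) ∈ qHS p a b := by
        refine ⟨Submodule.sub_mem _ hf (hEd_mem g.2), ?_⟩
        show _ ∈ LinearMap.ker (opE p)
        rw [LinearMap.mem_ker, map_sub, hgval, sub_self]
      have h2 : opEd p (g : QPoly p)
          ∈ Submodule.map (opEd p) (qHab p (a + 1) (b - 1)) := ⟨g.1, g.2, rfl⟩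
      have h3 := Submodule.add_mem_sup h1 h2
      rwa [sub_add_cancel] at h3
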